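/- Let k ≤ n be positive integers and let G be a simple graph on vertex set {1,…,k}. Then the supremum of Σ_{i=1}^k x_{ii} over all X ∈ V(k,n) satisfying x_{ij} = 0 for all i ≠ j and x_{ii} + x_{jj} ≤ 0 for every edge {i,j} of G equals 2·α(G) − k, and this supremum is attained. -/

import Mathlib

open Matrix

/-- The stability (independence) number of a simple graph on `Fin m`. -/
noncomputable def stabNum {m : ℕ} (G : SimpleGraph (Fin m)) : ℕ :=
  sSup {r | ∃ s : Finset (Fin m), (∀ i ∈ s, ∀ j ∈ s, ¬ G.Adj i j) ∧ s.card = r}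

lemma sum_pm {k : ℕ} (v : Fin k → ℝ) (h : ∀ i, v i = 1 ∨ v i = -1) :
    ∑ i, v i = 2 * ((Finset.univ.filter (fun i => v i = 1)).card : ℝ) - k := by
  classical
  rw [← Finset.sum_filter_add_sum_filter_not Finset.univ (fun i => v i = 1)]
  rw [Finset.sum_congr rfl (fun i hi => (Finset.mem_filter.mp hi).2),
      Finset.sum_congr rfl
        (fun i hi => ((h i).resolve_left (Finset.mem_filter.mp hi).2 : v i = -1))]
  have hsplit := Finset.card_filter_add_card_filter_not
    (s := (Finset.univ : Finset (Fin k))) (p := fun i => v i = 1)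
  simp only [Finset.sum_const, nsmul_eq_mul, Finset.card_univ, Fintype.card_fin] at *
  have : ((Finset.univ.filter (fun i => v i = 1)).card : ℝ) +
      ((Finset.univ.filter (fun i => ¬ v i = 1)).card : ℝ) = k := by
    exact_mod_cast congrArg (Nat.cast : ℕ → ℝ) hsplit
  linarith

theorem stmt0 (k n : ℕ) (hk : 0 < k) (hkn : k ≤ n) (G : SimpleGraph (Fin k)) :
    IsGreatest {y : ℝ | ∃ X : Matrix (Fin n) (Fin k) ℝ,
        Xᵀ * X = 1 ∧
        (∀ (i : Fin n) (j : Fin k), (i : ℕ) ≠ (j : ℕ) → X i j = 0) ∧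
        (∀ i j : Fin k, G.Adj i j →
          X (Fin.castLE hkn i) i + X (Fin.castLE hkn j) j ≤ 0) ∧
        y = ∑ i : Fin k, X (Fin.castLE hkn i) i}
      (2 * (stabNum G : ℝ) - k) := by
  classical
  set A := {r | ∃ s : Finset (Fin k), (∀ i ∈ s, ∀ j ∈ s, ¬ G.Adj i j) ∧ s.card = r} with hA
  have hAb : BddAbove A := by
    refine ⟨k, fun r hr => ?_⟩
    obtain ⟨s, _, hs⟩ := hr
    simpa [← hs] using (s.card_le_univ.trans_eq (by simp))
  have hmem : stabNum G ∈ A := Nat.sSup_mem ⟨0, ⟨∅, by simp⟩⟩ hAb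
  obtain ⟨s₀, hs₀stable, hs₀card⟩ := hmem
  constructor
  · -- membership: construct X
    refine ⟨fun i j => if (i : ℕ) = (j : ℕ) then (if j ∈ s₀ then (1:ℝ) else -1) else 0,
      ?_, ?_, ?_, ?_⟩
    · ext j j'
      refine Matrix.mul_apply.trans ?_
      rw [Finset.sum_eq_single (Fin.castLE hkn j)]
      · by_cases hjj : j = j'
        · subst hjj
          simp [Matrix.one_apply, Matrix.transpose]
          split <;> norm_num
        · have hne : (j : ℕ) ≠ (j' : ℕ) := by
            simpa [Fin.ext_iff] using hjj
          simp [Matrix.one_apply, hjj, hne]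
      · intro r _ hr
        have : (r : ℕ) ≠ (j : ℕ) := fun he => hr (Fin.ext (by simpa using he))
        simp [Matrix.transpose_apply, Matrix.transpose, this]
      · intro h'; exact absurd (Finset.mem_univ _) h'
    · intro i j hij; simp [hij]
    · intro i j hadj
      have hij : i ≠ j := hadj.ne
      have : ¬ (i ∈ s₀ ∧ j ∈ s₀) := fun ⟨hi, hj⟩ => hs₀stable i hi j hj hadj
      simp only [Fin.coe_castLE, if_pos rfl]
      by_cases hi : i ∈ s₀ <;> by_cases hj : j ∈ s₀ <;> simp_all <;> norm_num
    · have : ∀ i : Fin k,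
          (if ((Fin.castLE hkn i : Fin n) : ℕ) = (i : ℕ) then (if i ∈ s₀ then (1:ℝ) else -1) else 0)
          = (if i ∈ s₀ then (1:ℝ) else -1) := by intro i; simp
      rw [Finset.sum_congr rfl (fun i _ => this i)]
      rw [sum_pm (fun i => if i ∈ s₀ then (1:ℝ) else -1) (fun i => if h : i ∈ s₀ then Or.inl (by simp [h]) else Or.inr (by simp [h]))]
      have hfilter : (Finset.univ.filter (fun i => (if i ∈ s₀ then (1:ℝ) else -1) = 1)) = s₀ := by
        ext i; by_cases h : i ∈ s₀ <;> simp [h] <;> norm_num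
      rw [hfilter, hs₀card]
  · -- upper bound
    rintro y ⟨X, h1, h2, h3, rfl⟩
    set v : Fin k → ℝ := fun i => X (Fin.castLE hkn i) i with hv
    have hpm : ∀ i, v i = 1 ∨ v i = -1 := by
      intro i
      have h := congrFun (congrFun h1 i) i
      rw [Matrix.mul_apply] at h
      rw [Finset.sum_eq_single (Fin.castLE hkn i)] at h
      · rw [Matrix.one_apply_eq] at h
        exact mul_self_eq_one_iff.mp (by simpa [Matrix.transpose_apply] using h)
      · intro r _ hr
        have : (r : ℕ) ≠ (i : ℕ) := fun he => hr (Fin.ext (by simpa using he))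
        simp [Matrix.transpose_apply, h2 r i this]
      · intro h'; exact absurd (Finset.mem_univ _) h'
    rw [sum_pm v hpm]
    set S := Finset.univ.filter (fun i => v i = 1) with hS
    have hstable : ∀ i ∈ S, ∀ j ∈ S, ¬ G.Adj i j := by
      intro i hi j hj hadj
      have h3' := h3 i j hadj
      have hvi : v i = 1 := (Finset.mem_filter.mp hi).2
      have hvj : v j = 1 := (Finset.mem_filter.mp hj).2
      rw [hv] at hvi hvj
      simp only [hvi, hvj] at h3'
      -- careful: h3' uses X directly
      linarith [h3']
    have hle : S.card ≤ stabNum G := le_csSup hAb ⟨S, hstable, rfl⟩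
    have : (S.card : ℝ) ≤ (stabNum G : ℝ) := by exact_mod_cast hle
    linarith
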